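/- Let Ω₁ ⊂ ℍₛⁿ be real-path-connected, Ω₂ Ω₁-stem-preserving, and f : Ω₂ → ℍ path-slice. Then the point function ℱ_{Ω₁}^f : Ω₁ → ℍ^{2×1}, defined as F_{Ω₁}^f(γ) for any γ ∈ 𝒫(ℂⁿ, Ω₁) with γ^{𝔍(q)} ⊂ Ω₁ and γ^{𝔍(q)}(1) = q when q ∉ ℝⁿ, and as (f(q), 0)ᵀ when q ∈ ℝⁿ, is well-defined (independent of the choice of γ). -/
import Mathlib


noncomputable section
open Quaternion Matrix

abbrev Hq := Quaternion ℝ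

/-- The set of quaternionic imaginary units. -/
def Sph : Set Hq := {I | I ^ 2 = -1}

/-- `Ψ_i^I` applied to a single complex number: `x + y i ↦ x + y I`. -/
def psi (I : Hq) (z : ℂ) : Hq := (z.re : Hq) + z.im • I

/-- `Ψ_i^I : ℂⁿ → ℂ_Iⁿ`, componentwise. -/
def liftMap {n : ℕ} (I : Hq) (z : Fin n → ℂ) : Fin n → Hq := fun k => psi I (z k)

/-- The weakly slice cone `Hqₛⁿ = ⋃_{I∈𝕊} ℂ_Iⁿ`. -/
def HSn (n : ℕ) : Set (Fin n → Hq) := {q | ∃ I ∈ Sph, ∃ z : Fin n → ℂ, q = liftMap I z}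

/-- A point of `ℂⁿ` is real. -/
def isRealPt {n : ℕ} (z : Fin n → ℂ) : Prop := ∀ k, (z k).im = 0

/-- A point of `Hqⁿ` is real. -/
def isRealH {n : ℕ} (q : Fin n → Hq) : Prop := ∀ k, q k = ((q k).re : Hq)

/-- The lifted path `γ^I = Ψ_i^I ∘ γ`. -/
def liftP {n : ℕ} (γ : C(unitInterval, Fin n → ℂ)) (I : Hq) (t : unitInterval) : Fin n → Hq :=
  liftMap I (γ t)

/-- `𝕊(Ω, γ) = {I ∈ 𝕊 : γ^I ⊂ Ω}`. -/
def SUnits {n : ℕ} (Ω : Set (Fin n → Hq)) (γ : C(unitInterval, Fin n → ℂ)) : Set Hq :=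
  {I | I ∈ Sph ∧ ∀ t, liftP γ I t ∈ Ω}

/-- `𝒫(ℂⁿ, Ω)`: continuous paths starting in `ℝⁿ` with some lift inside `Ω`. -/
def PathsTo {n : ℕ} (Ω : Set (Fin n → Hq)) : Set C(unitInterval, Fin n → ℂ) :=
  {γ | isRealPt (γ 0) ∧ ∃ I, I ∈ SUnits Ω γ}

/-- `F` is a path-slice stem function of `f` on `Ω`:
`f(γ^I(1)) = (1, I)·F(γ)`. -/
def IsStem {n : ℕ} (Ω : Set (Fin n → Hq)) (f : (Fin n → Hq) → Hq)
    (F : C(unitInterval, Fin n → ℂ) → Fin 2 → Hq) : Prop :=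
  ∀ γ ∈ PathsTo Ω, ∀ I ∈ SUnits Ω γ, f (liftP γ I 1) = F γ 0 + I * F γ 1

/-- `f` is path-slice on `Ω`. -/
def IsPathSlice {n : ℕ} (Ω : Set (Fin n → Hq)) (f : (Fin n → Hq) → Hq) : Prop :=
  ∃ F, IsStem Ω f F

/-- `Ω` is real-path-connected. -/
def RealPathConnected {n : ℕ} (Ω : Set (Fin n → Hq)) : Prop :=
  ∀ q ∈ Ω, ∃ γ ∈ PathsTo Ω, ∃ I ∈ SUnits Ω γ, liftP γ I 1 = q

/-- `Ω₂` is `Ω₁`-stem-preserving: (i) every path of `𝒫(ℂⁿ,Ω₁)` has at least two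
units in `𝕊(Ω₂,γ)`; (ii) two paths with the same endpoint share `≠ 1` units. -/
def StemPreserving {n : ℕ} (Ω₁ Ω₂ : Set (Fin n → Hq)) : Prop :=
  (∀ γ ∈ PathsTo Ω₁, ∃ I ∈ SUnits Ω₂ γ, ∃ J ∈ SUnits Ω₂ γ, I ≠ J) ∧
  (∀ α ∈ PathsTo Ω₁, ∀ β ∈ PathsTo Ω₁, α 1 = β 1 →
    ∀ I ∈ SUnits Ω₂ α ∩ SUnits Ω₂ β, ∃ J ∈ SUnits Ω₂ α ∩ SUnits Ω₂ β, J ≠ I)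

/-- The formula `((1,I),(1,J))⁻¹ (f(γ^I(1)), f(γ^J(1)))ᵀ`. -/
def stemFormula {n : ℕ} (f : (Fin n → Hq) → Hq) (γ : C(unitInterval, Fin n → ℂ)) (I J : Hq) :
    Fin 2 → Hq :=
  ((I - J)⁻¹ • !![I, -J; (1 : Hq), -1]).mulVec ![f (liftP γ I 1), f (liftP γ J 1)]

/-- The sub-stem function `F_{Ω₁}^f` (depends only on `Ω₂` and `f`). -/
noncomputable def subStem {n : ℕ} (Ω₂ : Set (Fin n → Hq)) (f : (Fin n → Hq) → Hq)
    (γ : C(unitInterval, Fin n → ℂ)) : Fin 2 → Hq := by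
  classical
  exact if h : ∃ p : Hq × Hq, p.1 ∈ SUnits Ω₂ γ ∧ p.2 ∈ SUnits Ω₂ γ ∧ p.1 ≠ p.2
    then stemFormula f γ h.choose.1 h.choose.2
    else 0

/-- Normalized imaginary part of a quaternion. -/
def imUnit (a : Hq) : Hq := (‖a - (a.re : Hq)‖)⁻¹ • (a - (a.re : Hq))

/-- The map `𝔍 : Hqₛⁿ → 𝕊 ∪ {0}`. -/
noncomputable def Jmap {n : ℕ} (q : Fin n → Hq) : Hq := by
  classical
  exact if h : ∃ k : Fin n, q k ≠ ((q k).re : Hq) then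
    imUnit (q ((Finset.univ.filter fun k => q k ≠ ((q k).re : Hq)).min'
      ⟨h.choose, Finset.mem_filter.2 ⟨Finset.mem_univ _, h.choose_spec⟩⟩))
  else 0

/-- Componentwise complex conjugate of a path. -/
def conjPath {n : ℕ} (γ : C(unitInterval, Fin n → ℂ)) : C(unitInterval, Fin n → ℂ) :=
  ⟨fun t k => star (γ t k),
    continuous_pi fun k => continuous_star.comp ((continuous_apply k).comp γ.continuous)⟩

/-- The point-form sub-stem function `ℱ_{Ω₁}^f : Ω₁ → Hq^{2×1}`. -/
noncomputable def pointStem {n : ℕ} (Ω₁ Ω₂ : Set (Fin n → Hq)) (f : (Fin n → Hq) → Hq)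
    (q : Fin n → Hq) : Fin 2 → Hq := by
  classical
  exact if isRealH q then ![f q, 0]
    else if h : ∃ γ, γ ∈ PathsTo Ω₁ ∧ (∀ t, liftP γ (Jmap q) t ∈ Ω₁) ∧ liftP γ (Jmap q) 1 = q
    then subStem Ω₂ f h.choose
    else 0

/-- The `*`-product of functions: `(f*g)(q) = (f(q), 𝔍(q)f(q)) · ℱ_{Ω₁}^g(q)`. -/
noncomputable def starProd {n : ℕ} (Ω₁ Ω₂ : Set (Fin n → Hq)) (f g : (Fin n → Hq) → Hq)
    (q : Fin n → Hq) : Hq :=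
  f q * pointStem Ω₁ Ω₂ g q 0 + (Jmap q * f q) * pointStem Ω₁ Ω₂ g q 1

/-- The `*`-product on `Hq^{2×1}` coming from `Hq ⊗_ℝ ℂ`. -/
def vstar (p q : Fin 2 → Hq) : Fin 2 → Hq :=
  ![p 0 * q 0 - p 1 * q 1, p 1 * q 0 + p 0 * q 1]

/-- `Ω` is slice-open: a subset of `Hqₛⁿ` all of whose slices are open. -/
def SliceOpen {n : ℕ} (Ω : Set (Fin n → Hq)) : Prop :=
  Ω ⊆ HSn n ∧ ∀ I ∈ Sph, IsOpen {z : Fin n → ℂ | liftMap I z ∈ Ω}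

/-- `Ω` is slice-connected. -/
def SliceConnected {n : ℕ} (Ω : Set (Fin n → Hq)) : Prop :=
  ∀ U V : Set (Fin n → Hq), SliceOpen U → SliceOpen V → Ω ⊆ U ∪ V →
    (Ω ∩ U).Nonempty → (Ω ∩ V).Nonempty → (Ω ∩ U ∩ V).Nonempty

/-- `Ω` is a slice-domain. -/
def SliceDomain {n : ℕ} (Ω : Set (Fin n → Hq)) : Prop :=
  SliceOpen Ω ∧ SliceConnected Ω

/-- `Ω` is self-stem-preserving. -/
def SelfStemPreserving {n : ℕ} (Ω : Set (Fin n → Hq)) : Prop :=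
  RealPathConnected Ω ∧ StemPreserving Ω Ω

/-- `Ω` is open in the Euclidean subspace topology of `Hqₛⁿ`. -/
def EuclideanOpenIn {n : ℕ} (Ω : Set (Fin n → Hq)) : Prop :=
  ∃ U : Set (Fin n → Hq), IsOpen U ∧ Ω = U ∩ HSn n

/-- `Ω` is weakly axially symmetric. -/
def WeaklyAxiallySymmetric {n : ℕ} (Ω : Set (Fin n → Hq)) : Prop :=
  ∀ (x y : Fin n → ℝ) (I : Hq), I ∈ Sph →
    (fun k => (x k : Hq) + y k • I) ∈ Ω → (fun k => (x k : Hq) - y k • I) ∈ Ω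
lemma sph_ne_zero {I : Hq} (hI : I ∈ Sph) : I ≠ 0 := by
  intro h
  have h2 : (I : Hq) ^ 2 = -1 := hI
  rw [h] at h2
  simp at h2

lemma sph_mul_self {I : Hq} (hI : I ∈ Sph) : I * I = -1 := by
  rw [← sq]; exact hI

lemma sph_re_zero {I : Hq} (hI : I ∈ Sph) : I.re = 0 := by
  have h : I * I = -1 := sph_mul_self hI
  have h0 : (I*I).re = -1 := by rw [h]; simp
  have h1 : (I*I).imI = 0 := by rw [h]; simp
  have h2 : (I*I).imJ = 0 := by rw [h]; simp
  have h3 : (I*I).imK = 0 := by rw [h]; simp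
  rw [Quaternion.re_mul] at h0
  rw [Quaternion.imI_mul] at h1
  rw [Quaternion.imJ_mul] at h2
  rw [Quaternion.imK_mul] at h3
  nlinarith [sq_nonneg I.re, sq_nonneg I.imI, sq_nonneg I.imJ, sq_nonneg I.imK]

lemma psi_inj {I : Hq} (hI : I ∈ Sph) {z w : ℂ} (h : psi I z = psi I w) : z = w := by
  have hre : I.re = 0 := sph_re_zero hI
  have h1 : z.re = w.re := by
    have := congrArg QuaternionAlgebra.re h
    simpa [psi, hre] using this
  have h2 : z.im = w.im := by
    have h' : z.im • I = w.im • I := by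
      have := h
      unfold psi at this
      rw [h1] at this
      exact add_left_cancel this
    have : (z.im - w.im) • I = 0 := by rw [sub_smul, h', sub_self]
    rcases smul_eq_zero.mp this with h | h
    · linarith [h]
    · exact absurd h (sph_ne_zero hI)
  exact Complex.ext h1 h2

lemma imUnit_mem_sph {a : Hq} (h : a ≠ ((a.re : ℝ) : Hq)) : imUnit a ∈ Sph := by
  set p := a - ((a.re : ℝ) : Hq) with hp
  have hpre : p.re = 0 := by simp [hp]
  have hpne : p ≠ 0 := sub_ne_zero.mpr h
  have hstar : star p = -p := by ext <;> simp [hpre]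
  have hpp : p * p = -((Quaternion.normSq p : ℝ) : Hq) := by
    have h1 : p * star p = ((Quaternion.normSq p : ℝ) : Hq) := Quaternion.self_mul_star p
    rw [hstar, mul_neg] at h1
    linear_combination (norm := noncomm_ring) -h1
  have hnorm : ‖p‖ ≠ 0 := norm_ne_zero_iff.mpr hpne
  show (‖p‖⁻¹ • p) ^ 2 = -1
  rw [sq, smul_mul_smul_comm, hpp, smul_neg, Quaternion.smul_coe]
  have h3 : ‖p‖⁻¹ * ‖p‖⁻¹ * Quaternion.normSq p = 1 := by
    rw [Quaternion.normSq_eq_norm_mul_self]; field_simp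
  rw [h3]; simp

lemma Jmap_mem_sph {n : ℕ} {q : Fin n → Hq} (hqr : ¬ isRealH q) : Jmap q ∈ Sph := by
  have hex : ∃ k, q k ≠ (((q k).re : ℝ) : Hq) := by
    by_contra h
    push_neg at h
    exact hqr h
  classical
  unfold Jmap
  rw [dif_pos hex]
  apply imUnit_mem_sph
  have hm : ((Finset.univ.filter fun k => q k ≠ (((q k).re : ℝ) : Hq)).min'
      ⟨hex.choose, Finset.mem_filter.2 ⟨Finset.mem_univ _, hex.choose_spec⟩⟩) ∈
      (Finset.univ.filter fun k => q k ≠ (((q k).re : ℝ) : Hq)) := Finset.min'_mem _ _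
  exact (Finset.mem_filter.mp hm).2
lemma stemFormula_eq {n : ℕ} {Ω₂ : Set (Fin n → Hq)} {f : (Fin n → Hq) → Hq}
    {F : C(unitInterval, Fin n → ℂ) → Fin 2 → Hq}
    (hF : IsStem Ω₂ f F) {γ : C(unitInterval, Fin n → ℂ)} (hγ : γ ∈ PathsTo Ω₂) {I J : Hq}
    (hI : I ∈ SUnits Ω₂ γ) (hJ : J ∈ SUnits Ω₂ γ) (hIJ : I ≠ J) :
    stemFormula f γ I J = F γ := by
  have hI2 : I * I = -1 := sph_mul_self hI.1
  have hJ2 : J * J = -1 := sph_mul_self hJ.1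
  have ha := hF γ hγ I hI
  have hb := hF γ hγ J hJ
  have hne : I - J ≠ 0 := sub_ne_zero.mpr hIJ
  set x := F γ 0 with hx
  set y := F γ 1 with hy
  funext k
  fin_cases k
  · show stemFormula f γ I J 0 = x
    unfold stemFormula
    rw [ha, hb]
    simp only [Matrix.mulVec, dotProduct, Fin.sum_univ_two, Matrix.smul_apply,
      Matrix.cons_val', Matrix.cons_val_zero, Matrix.empty_val', Matrix.cons_val_fin_one,
      Matrix.cons_val_one, Matrix.head_cons, Matrix.head_fin_const, Matrix.of_apply,
      smul_eq_mul]
    have e1 : I * (x + I * y) + -J * (x + J * y) = (I - J) * x + (I * I) * y - (J * J) * y := by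
      noncomm_ring
    rw [hI2, hJ2] at e1
    have e2 : I * (x + I * y) + -J * (x + J * y) = (I - J) * x := by rw [e1]; noncomm_ring
    have e3 : (I - J)⁻¹ * I * (x + I * y) + (I - J)⁻¹ * -J * (x + J * y)
        = (I - J)⁻¹ * (I * (x + I * y) + -J * (x + J * y)) := by noncomm_ring
    rw [e3, e2, inv_mul_cancel_left₀ hne]
  · show stemFormula f γ I J 1 = y
    unfold stemFormula
    rw [ha, hb]
    simp only [Matrix.mulVec, dotProduct, Fin.sum_univ_two, Matrix.smul_apply,
      Matrix.cons_val', Matrix.cons_val_zero, Matrix.empty_val', Matrix.cons_val_fin_one,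
      Matrix.cons_val_one, Matrix.head_cons, Matrix.head_fin_const, Matrix.of_apply,
      smul_eq_mul]
    have e2 : (1 : Hq) * (x + I * y) + -1 * (x + J * y) = (I - J) * y := by noncomm_ring
    have e3 : (I - J)⁻¹ * 1 * (x + I * y) + (I - J)⁻¹ * -1 * (x + J * y)
        = (I - J)⁻¹ * ((1 : Hq) * (x + I * y) + -1 * (x + J * y)) := by noncomm_ring
    rw [e3, e2, inv_mul_cancel_left₀ hne]

lemma subStem_eq {n : ℕ} {Ω₂ : Set (Fin n → Hq)} {f : (Fin n → Hq) → Hq}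
    {F : C(unitInterval, Fin n → ℂ) → Fin 2 → Hq}
    (hF : IsStem Ω₂ f F) {γ : C(unitInterval, Fin n → ℂ)} (h0 : isRealPt (γ 0))
    (hpair : ∃ p : Hq × Hq, p.1 ∈ SUnits Ω₂ γ ∧ p.2 ∈ SUnits Ω₂ γ ∧ p.1 ≠ p.2) :
    subStem Ω₂ f γ = F γ := by
  have hγ : γ ∈ PathsTo Ω₂ := ⟨h0, hpair.choose.1, hpair.choose_spec.1⟩
  unfold subStem
  rw [dif_pos hpair]
  exact stemFormula_eq hF hγ hpair.choose_spec.1 hpair.choose_spec.2.1 hpair.choose_spec.2.2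
/-- the point function `ℱ_{Ω₁}^f` is well-defined: for a non-real
`q ∈ Ω₁`, `F_{Ω₁}^f(γ)` does not depend on the choice of path `γ` with
`γ^{𝔍(q)} ⊂ Ω₁` and `γ^{𝔍(q)}(1) = q`, and `ℱ_{Ω₁}^f(q)` equals this value. -/
theorem pointStem_well_defined {n : ℕ} (Ω₁ Ω₂ : Set (Fin n → Hq))
    (h₁ : RealPathConnected Ω₁) (h₂ : StemPreserving Ω₁ Ω₂)
    (f : (Fin n → Hq) → Hq) (hf : IsPathSlice Ω₂ f)
    (q : Fin n → Hq) (hq : q ∈ Ω₁) (hqr : ¬ isRealH q)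
    (γ₁ γ₂ : C(unitInterval, Fin n → ℂ))
    (hγ₁ : γ₁ ∈ PathsTo Ω₁) (hγ₂ : γ₂ ∈ PathsTo Ω₁)
    (h₁' : (∀ t, liftP γ₁ (Jmap q) t ∈ Ω₁) ∧ liftP γ₁ (Jmap q) 1 = q)
    (h₂' : (∀ t, liftP γ₂ (Jmap q) t ∈ Ω₁) ∧ liftP γ₂ (Jmap q) 1 = q) :
    subStem Ω₂ f γ₁ = subStem Ω₂ f γ₂ ∧
    pointStem Ω₁ Ω₂ f q = subStem Ω₂ f γ₁ := by
  classical
  obtain ⟨F, hF⟩ := hf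
  have hJs : Jmap q ∈ Sph := Jmap_mem_sph hqr
  have key : ∀ α β : C(unitInterval, Fin n → ℂ), α ∈ PathsTo Ω₁ → β ∈ PathsTo Ω₁ →
      ((∀ t, liftP α (Jmap q) t ∈ Ω₁) ∧ liftP α (Jmap q) 1 = q) →
      ((∀ t, liftP β (Jmap q) t ∈ Ω₁) ∧ liftP β (Jmap q) 1 = q) →
      subStem Ω₂ f α = subStem Ω₂ f β := by
    intro α β hα hβ hα' hβ'
    have hend : α 1 = β 1 := by
      funext k
      apply psi_inj hJs
      have e1 := congrFun hα'.2 k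
      have e2 := congrFun hβ'.2 k
      simp only [liftP, liftMap] at e1 e2
      rw [e1, e2]
    let p1 : Path (α 0) (α 1) := { toContinuousMap := α, source' := rfl, target' := rfl }
    let p2 : Path (β 0) (β 1) := { toContinuousMap := β, source' := rfl, target' := rfl }
    let p2' : Path (α 1) (β 1) := (p2.symm.trans p2).cast hend rfl
    let δp : Path (α 0) (β 1) := p1.trans p2'
    let δ : C(unitInterval, Fin n → ℂ) := δp.toContinuousMap
    have hδcoe : ∀ t, δ t = δp t := fun t => rfl
    have hr1 : Set.range ⇑δp = Set.range ⇑α ∪ Set.range ⇑β := by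
      have h1 : Set.range ⇑δp = Set.range ⇑p1 ∪ Set.range ⇑p2' := Path.trans_range p1 p2'
      have h2 : Set.range ⇑p2' = Set.range ⇑p2.symm ∪ Set.range ⇑p2 :=
        Path.trans_range p2.symm p2
      have h3 : Set.range ⇑p2.symm = Set.range ⇑p2 := Path.symm_range p2
      have h4 : Set.range ⇑p1 = Set.range ⇑α := rfl
      have h5 : Set.range ⇑p2 = Set.range ⇑β := rfl
      rw [h1, h2, h3, h4, h5, Set.union_self]
    have hmem : ∀ t, ∃ s, δ t = α s ∨ δ t = β s := by
      intro t
      have : δp t ∈ Set.range ⇑α ∪ Set.range ⇑β := by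
        rw [← hr1]; exact ⟨t, rfl⟩
      rcases this with ⟨s, hs⟩ | ⟨s, hs⟩
      · exact ⟨s, Or.inl (by rw [hδcoe t, ← hs])⟩
      · exact ⟨s, Or.inr (by rw [hδcoe t, ← hs])⟩
    have hsubα : ∀ s, ∃ t, δ t = α s := by
      intro s
      have : α s ∈ Set.range ⇑δp := by rw [hr1]; exact Or.inl ⟨s, rfl⟩
      obtain ⟨t, ht⟩ := this
      exact ⟨t, by rw [hδcoe t, ht]⟩
    have hsubβ : ∀ s, ∃ t, δ t = β s := by
      intro s
      have : β s ∈ Set.range ⇑δp := by rw [hr1]; exact Or.inr ⟨s, rfl⟩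
      obtain ⟨t, ht⟩ := this
      exact ⟨t, by rw [hδcoe t, ht]⟩
    have hδ0 : isRealPt (δ 0) := by
      have h0 : δ 0 = α 0 := δp.source
      rw [h0]; exact hα.1
    have hδΩ : Jmap q ∈ SUnits Ω₁ δ := by
      refine ⟨hJs, fun t => ?_⟩
      obtain ⟨s, hs | hs⟩ := hmem t
      · have := hα'.1 s
        simp only [liftP] at this ⊢
        rw [hs]; exact this
      · have := hβ'.1 s
        simp only [liftP] at this ⊢
        rw [hs]; exact this
    have hδ : δ ∈ PathsTo Ω₁ := ⟨hδ0, Jmap q, hδΩ⟩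
    obtain ⟨I, hI, J, hJ, hIJ⟩ := h₂.1 δ hδ
    have hIα : I ∈ SUnits Ω₂ α := by
      refine ⟨hI.1, fun s => ?_⟩
      obtain ⟨t, ht⟩ := hsubα s
      have := hI.2 t
      simp only [liftP] at this ⊢
      rw [← ht]; exact this
    have hJα : J ∈ SUnits Ω₂ α := by
      refine ⟨hJ.1, fun s => ?_⟩
      obtain ⟨t, ht⟩ := hsubα s
      have := hJ.2 t
      simp only [liftP] at this ⊢
      rw [← ht]; exact this
    have hIβ : I ∈ SUnits Ω₂ β := by
      refine ⟨hI.1, fun s => ?_⟩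
      obtain ⟨t, ht⟩ := hsubβ s
      have := hI.2 t
      simp only [liftP] at this ⊢
      rw [← ht]; exact this
    have hJβ : J ∈ SUnits Ω₂ β := by
      refine ⟨hJ.1, fun s => ?_⟩
      obtain ⟨t, ht⟩ := hsubβ s
      have := hJ.2 t
      simp only [liftP] at this ⊢
      rw [← ht]; exact this
    have hαP : α ∈ PathsTo Ω₂ := ⟨hα.1, I, hIα⟩
    have hβP : β ∈ PathsTo Ω₂ := ⟨hβ.1, I, hIβ⟩
    rw [subStem_eq hF hα.1 ⟨(I, J), hIα, hJα, hIJ⟩,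
      subStem_eq hF hβ.1 ⟨(I, J), hIβ, hJβ, hIJ⟩,
      ← stemFormula_eq hF hαP hIα hJα hIJ, ← stemFormula_eq hF hβP hIβ hJβ hIJ]
    unfold stemFormula liftP
    rw [hend]
  refine ⟨key γ₁ γ₂ hγ₁ hγ₂ h₁' h₂', ?_⟩
  have hex : ∃ γ, γ ∈ PathsTo Ω₁ ∧ (∀ t, liftP γ (Jmap q) t ∈ Ω₁) ∧ liftP γ (Jmap q) 1 = q :=
    ⟨γ₁, hγ₁, h₁'.1, h₁'.2⟩
  unfold pointStem
  rw [if_neg hqr, dif_pos hex]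
  exact key hex.choose γ₁ hex.choose_spec.1 hγ₁
    ⟨hex.choose_spec.2.1, hex.choose_spec.2.2⟩ h₁'
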